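/- Along any radially reduced future-directed null geodesic in the Schwarzschild exterior of mass M, the rescaled weight Ω·φ_+ satisfies d/ds (Ω φ_+) = 𝐚(r, p_{r*}, p_t)·Ω φ_+, where 𝐚(r, p_{r*}, p_t) := ((r² + 2Mr + 3M²)·E)/(r·(r+6M)^{1/2}·(r^{3/2} + M(r+6M)^{1/2})) + 2M·|p_u|/(r²Ω²). -/

import Mathlib

open Real

/-- The trapping weight `φ₊ = (r/Ω)·p_{r*} − (r/Ω)·(1+6M/r)^{1/2}·(1−3M/r)·p_t`,
with `p_t = −E` and `Ω = (1 − 2M/r)^{1/2}`. -/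
noncomputable def phiPlus (M E rv pv : ℝ) : ℝ :=
  rv / Real.sqrt (1 - 2 * M / rv) * pv
    - rv / Real.sqrt (1 - 2 * M / rv) * Real.sqrt (1 + 6 * M / rv) * (1 - 3 * M / rv) * (-E)

/-- The coefficient `𝐚(r, p_{r*}, p_t)`, with `|p_u| = (E + p_{r*})/2`. -/
noncomputable def aBold (M E rv pv : ℝ) : ℝ :=
  (rv ^ 2 + 2 * M * rv + 3 * M ^ 2) * E
      / (rv * Real.sqrt (rv + 6 * M) * (rv * Real.sqrt rv + M * Real.sqrt (rv + 6 * M)))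
    + 2 * M * ((E + pv) / 2) / (rv ^ 2 * (1 - 2 * M / rv))

/-- `Ω·φ₊` has the closed form `r·p + E·(r−3M)·√(r+6M)/√r`. -/
lemma omega_phi (M E Rv pv : ℝ) (hM : 0 < M) (hR : 2 * M < Rv) :
    Real.sqrt (1 - 2 * M / Rv) * phiPlus M E Rv pv
      = Rv * pv + E * ((Rv - 3 * M) * Real.sqrt (Rv + 6 * M) / Real.sqrt Rv) := by
  have hR0 : 0 < Rv := by linarith
  have hO2 : 0 < 1 - 2 * M / Rv := by rw [sub_pos, div_lt_one hR0]; exact hR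
  have hO : Real.sqrt (1 - 2 * M / Rv) ≠ 0 := by positivity
  have hx : Real.sqrt Rv ≠ 0 := by positivity
  have hb : Real.sqrt (Rv - 2 * M) ≠ 0 := ne_of_gt (Real.sqrt_pos.mpr (by linarith))
  have h1 : (1 + 6 * M / Rv) = (Rv + 6 * M) / Rv := by field_simp
  rw [phiPlus, h1, Real.sqrt_div (by positivity)]
  field_simp
  rw [mul_div_cancel_left₀ _ (Real.sqrt_ne_zero'.mpr (div_pos (by linarith) hR0))]
  ring

/-- The algebraic core identity. -/
lemma key_identity (M E p X Y L : ℝ) (hM : 0 < M) (hR : 2 * M < X ^ 2)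
    (hX0 : 0 < X) (hY0 : 0 < Y) (hY2 : Y ^ 2 = X ^ 2 + 6 * M)
    (hnull : E ^ 2 = p ^ 2 + (1 - 2 * M / X ^ 2) * L ^ 2 / (X ^ 2) ^ 2) :
    (((X ^ 2) ^ 2 + 2 * M * X ^ 2 + 3 * M ^ 2) * E
          / (X ^ 2 * Y * (X ^ 2 * X + M * Y))
        + 2 * M * ((E + p) / 2) / ((X ^ 2) ^ 2 * (1 - 2 * M / X ^ 2)))
      * (X ^ 2 * p + E * ((X ^ 2 - 3 * M) * Y / X))
    = p * p + X ^ 2 * ((X ^ 2 - 3 * M) / (X ^ 2) ^ 4 * L ^ 2)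
      + E * (((p * Y + (X ^ 2 - 3 * M) * (1 / (2 * Y) * p)) * X
          - (X ^ 2 - 3 * M) * Y * (1 / (2 * X) * p)) / X ^ 2) := by
  have hR0 : 0 < X ^ 2 := by positivity
  have hXne : X ≠ 0 := ne_of_gt hX0
  have hYne : Y ≠ 0 := ne_of_gt hY0
  have h2M : X ^ 2 - 2 * M ≠ 0 := by nlinarith
  have hO : (1 - 2 * M / X ^ 2) ≠ 0 := by
    have h : 1 - 2 * M / X ^ 2 = (X ^ 2 - 2 * M) / X ^ 2 := by field_simp
    rw [h]; exact div_ne_zero h2M (by positivity)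
  have hden : X ^ 2 * X + M * Y ≠ 0 := by positivity
  have hnull' : L ^ 2 * (X ^ 2 - 2 * M) = X ^ 6 * (E ^ 2 - p ^ 2) := by
    field_simp at hnull
    linear_combination -hnull
  field_simp
  linear_combination
    (6*Y^2*M^2 - 2*X^2*Y^2*M + 6*X^3*Y*M - 2*X^5*Y) * hnull'
    + (-6*X^3*Y*M^3*E^2 + X^5*Y*M^2*E*p + 2*X^5*Y*M^2*E^2 + 2*X^6*M^2*E*p
       - X^7*Y*M*E*p + X^8*M*E*p - X^10*E*p) * hY2

/-- along any radially reduced future-directed null geodesic, the rescaled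
weight `Ω·φ₊` satisfies `d/ds (Ωφ₊) = 𝐚(r, p_{r*}, p_t)·Ωφ₊`. -/
theorem schwarzschild_Omega_phiPlus_derivative
    (M : ℝ) (hM : 0 < M)
    (I : Set ℝ) (hI : I.OrdConnected)
    (r prs : ℝ → ℝ) (E ℓ : ℝ) (hE : 0 < E) (hl : 0 ≤ ℓ)
    (hr2M : ∀ s ∈ I, 2 * M < r s)
    (hdr : ∀ s ∈ I, HasDerivWithinAt r (prs s) I s)
    (hdp : ∀ s ∈ I, HasDerivWithinAt prs ((r s - 3 * M) / (r s) ^ 4 * ℓ ^ 2) I s)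
    (hnull : ∀ s ∈ I, E ^ 2 = (prs s) ^ 2 + (1 - 2 * M / r s) * ℓ ^ 2 / (r s) ^ 2) :
    ∀ s ∈ I,
      HasDerivWithinAt (fun u => Real.sqrt (1 - 2 * M / r u) * phiPlus M E (r u) (prs u))
        (aBold M E (r s) (prs s)
          * (Real.sqrt (1 - 2 * M / r s) * phiPlus M E (r s) (prs s))) I s := by
  intro s hs
  have hRs : 2 * M < r s := hr2M s hs
  have hR0 : 0 < r s := by linarith
  have hX0 : 0 < Real.sqrt (r s) := Real.sqrt_pos.mpr hR0
  have hY0 : 0 < Real.sqrt (r s + 6 * M) := Real.sqrt_pos.mpr (by linarith)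
  have hX2 : (Real.sqrt (r s)) ^ 2 = r s := Real.sq_sqrt hR0.le
  have hY2 : (Real.sqrt (r s + 6 * M)) ^ 2 = r s + 6 * M :=
    Real.sq_sqrt (by linarith)
  -- derivative components
  have d1 := (hdr s hs).mul (hdp s hs)
  have d2 : HasDerivWithinAt (fun u => Real.sqrt (r u))
      (1 / (2 * Real.sqrt (r s)) * prs s) I s :=
    (Real.hasDerivAt_sqrt (ne_of_gt hR0)).comp_hasDerivWithinAt s (hdr s hs)
  have d3 : HasDerivWithinAt (fun u => Real.sqrt (r u + 6 * M))
      (1 / (2 * Real.sqrt (r s + 6 * M)) * prs s) I s :=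
    (Real.hasDerivAt_sqrt (by positivity : r s + 6 * M ≠ 0)).comp_hasDerivWithinAt s
      ((hdr s hs).add_const (6 * M))
  have d4 := ((hdr s hs).sub_const (3 * M)).mul d3
  have d5 := d4.div d2 (ne_of_gt hX0)
  have d6 := d5.const_mul E
  have hG := d1.add d6
  have heq : ∀ u ∈ I,
      Real.sqrt (1 - 2 * M / r u) * phiPlus M E (r u) (prs u)
        = r u * prs u + E * ((r u - 3 * M) * Real.sqrt (r u + 6 * M) / Real.sqrt (r u)) :=
    fun u hu => omega_phi M E (r u) (prs u) hM (hr2M u hu)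
  rw [omega_phi M E (r s) (prs s) hM hRs]
  refine HasDerivWithinAt.congr ?_ heq (heq s hs)
  convert hG using 1
  · rfl
  have hk := key_identity M E (prs s) (Real.sqrt (r s)) (Real.sqrt (r s + 6 * M)) ℓ
    hM (by rw [hX2]; exact hRs) hX0 hY0 (by rw [hX2, hY2]) (by rw [hX2]; exact hnull s hs)
  rw [aBold, hX2]
  rw [hX2] at hk
  exact hk
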